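/- (Classification of solutions, K = 1 case.) Let I ⊆ ℝ be an open interval and let c₁, c₂ : I → ℝ be C¹ functions with c₁(z) ≠ 0 for all z ∈ I, satisfying for all z ∈ I the system: (i) c₁'·(c₁² + c₂²) = z·c₁; (ii) c₁'·c₂·(c₁² + c₂²) − c₁·c₂'·(c₁² + c₂²) − 2z·c₁·c₂ = 0; (iii) c₁'·(c₁⁴ − c₂⁴) + 2c₂'·c₁·c₂·(c₁² + c₂²) + 3z·c₁·c₂² − z·c₁³ = 0. Then there exist constants d₁, d₂ ∈ ℝ such that for all z ∈ I: c₁(z)·c₂(z) = d₁ and c₁(z)² − c₂(z)² = z² + 2d₂; consequently c₁(z)² = ( 2d₂ + z² + √((2d₂ + z²)² + 4d₁²) ) / 2 when c₁ > 0, and in the case d₁ = 0 one has c₂ ≡ 0 and c₁(z)² = z² + 2d₂. -/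

import Mathlib

lemma const_of_hasDerivAt_zero {a b : ℝ} {f : ℝ → ℝ}
    (hf : ∀ z ∈ Set.Ioo a b, HasDerivAt f 0 z) :
    ∀ x ∈ Set.Ioo a b, ∀ y ∈ Set.Ioo a b, f x = f y := by
  intro x hx y hy
  refine (convex_Ioo a b).is_const_of_fderivWithin_eq_zero
    (fun z hz => ((hf z hz).differentiableAt).differentiableWithinAt) (fun z hz => ?_) hx hy
  rw [fderivWithin_of_isOpen isOpen_Ioo hz, (hf z hz).hasFDerivAt.fderiv]
  ext t; simp

/-- Classification of solutions of the system (12) (K = 1 case): there are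
constants d₁, d₂ with c₁c₂ = d₁ and c₁² − c₂² = z² + 2d₂; when c₁ > 0,
c₁² = (2d₂ + z² + √((2d₂ + z²)² + 4d₁²))/2; and when d₁ = 0, c₂ ≡ 0 and c₁² = z² + 2d₂. -/
theorem stmt_13 (a b : ℝ) (c₁ c₂ : ℝ → ℝ)
    (hc₁ : ContDiffOn ℝ 1 c₁ (Set.Ioo a b)) (hc₂ : ContDiffOn ℝ 1 c₂ (Set.Ioo a b))
    (hne : ∀ z ∈ Set.Ioo a b, c₁ z ≠ 0)
    (h1 : ∀ z ∈ Set.Ioo a b, deriv c₁ z * ((c₁ z) ^ 2 + (c₂ z) ^ 2) = z * c₁ z)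
    (h2 : ∀ z ∈ Set.Ioo a b,
      deriv c₁ z * c₂ z * ((c₁ z) ^ 2 + (c₂ z) ^ 2) -
        c₁ z * deriv c₂ z * ((c₁ z) ^ 2 + (c₂ z) ^ 2) - 2 * z * c₁ z * c₂ z = 0)
    (h3 : ∀ z ∈ Set.Ioo a b,
      deriv c₁ z * ((c₁ z) ^ 4 - (c₂ z) ^ 4) +
        2 * deriv c₂ z * c₁ z * c₂ z * ((c₁ z) ^ 2 + (c₂ z) ^ 2) +
        3 * z * c₁ z * (c₂ z) ^ 2 - z * (c₁ z) ^ 3 = 0) :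
    ∃ d₁ d₂ : ℝ,
      (∀ z ∈ Set.Ioo a b,
        c₁ z * c₂ z = d₁ ∧ (c₁ z) ^ 2 - (c₂ z) ^ 2 = z ^ 2 + 2 * d₂) ∧
      ((∀ z ∈ Set.Ioo a b, 0 < c₁ z) → ∀ z ∈ Set.Ioo a b,
        (c₁ z) ^ 2 =
          (2 * d₂ + z ^ 2 + Real.sqrt ((2 * d₂ + z ^ 2) ^ 2 + 4 * d₁ ^ 2)) / 2) ∧
      (d₁ = 0 → ∀ z ∈ Set.Ioo a b, c₂ z = 0 ∧ (c₁ z) ^ 2 = z ^ 2 + 2 * d₂) := by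
  rcases Set.eq_empty_or_nonempty (Set.Ioo a b) with he | ⟨z₀, hz₀⟩
  · exact ⟨0, 0, by simp [he]⟩
  -- differentiability
  have hd₁ : ∀ z ∈ Set.Ioo a b, HasDerivAt c₁ (deriv c₁ z) z := fun z hz =>
    ((hc₁.contDiffAt (isOpen_Ioo.mem_nhds hz)).differentiableAt one_ne_zero).hasDerivAt
  have hd₂ : ∀ z ∈ Set.Ioo a b, HasDerivAt c₂ (deriv c₂ z) z := fun z hz =>
    ((hc₂.contDiffAt (isOpen_Ioo.mem_nhds hz)).differentiableAt one_ne_zero).hasDerivAt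
  have hP : ∀ z ∈ Set.Ioo a b, (0:ℝ) < (c₁ z) ^ 2 + (c₂ z) ^ 2 := fun z hz => by
    have := hne z hz
    positivity
  -- c₂' * P = -z * c₂
  have key2 : ∀ z ∈ Set.Ioo a b,
      deriv c₂ z * ((c₁ z) ^ 2 + (c₂ z) ^ 2) = -z * c₂ z := by
    intro z hz
    have e1 := h1 z hz
    have e2 := h2 z hz
    have hc := hne z hz
    have : c₁ z * (deriv c₂ z * ((c₁ z) ^ 2 + (c₂ z) ^ 2) - (-z * c₂ z)) = 0 := by
      linear_combination c₂ z * e1 - e2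
    rcases mul_eq_zero.1 this with h | h
    · exact absurd h hc
    · linarith
  -- first invariant
  have inv1 : ∀ z ∈ Set.Ioo a b, HasDerivAt (fun z => c₁ z * c₂ z) 0 z := by
    intro z hz
    have h := (hd₁ z hz).mul (hd₂ z hz)
    have hPz := (hP z hz).ne'
    have : deriv c₁ z * c₂ z + c₁ z * deriv c₂ z = 0 := by
      have e1 := h1 z hz
      have e2 := key2 z hz
      have : (deriv c₁ z * c₂ z + c₁ z * deriv c₂ z) * ((c₁ z)^2 + (c₂ z)^2) = 0 := by
        linear_combination c₂ z * e1 + c₁ z * e2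
      exact (mul_eq_zero.1 this).resolve_right hPz
    rwa [this] at h
  -- second invariant
  have inv2 : ∀ z ∈ Set.Ioo a b,
      HasDerivAt (fun z => (c₁ z) ^ 2 - (c₂ z) ^ 2 - z ^ 2) 0 z := by
    intro z hz
    have h := (((hd₁ z hz).pow 2).sub ((hd₂ z hz).pow 2)).sub
      ((hasDerivAt_pow 2 z))
    have hPz := (hP z hz).ne'
    have h' : HasDerivAt (fun z => (c₁ z) ^ 2 - (c₂ z) ^ 2 - z ^ 2)
        (2 * c₁ z * deriv c₁ z - 2 * c₂ z * deriv c₂ z - 2 * z) z := by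
      refine h.congr_deriv ?_
      push_cast
      ring
    have hval : 2 * c₁ z * deriv c₁ z - 2 * c₂ z * deriv c₂ z - 2 * z = 0 := by
      have e1 := h1 z hz
      have e2 := key2 z hz
      have : (2 * c₁ z * deriv c₁ z - 2 * c₂ z * deriv c₂ z - 2 * z) *
          ((c₁ z)^2 + (c₂ z)^2) = 0 := by
        linear_combination 2 * c₁ z * e1 - 2 * c₂ z * e2
      exact (mul_eq_zero.1 this).resolve_right hPz
    rwa [hval] at h'
  set d₁ := c₁ z₀ * c₂ z₀ with hd1def
  set d₂ := ((c₁ z₀) ^ 2 - (c₂ z₀) ^ 2 - z₀ ^ 2) / 2 with hd2def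
  have main : ∀ z ∈ Set.Ioo a b,
      c₁ z * c₂ z = d₁ ∧ (c₁ z) ^ 2 - (c₂ z) ^ 2 = z ^ 2 + 2 * d₂ := by
    intro z hz
    constructor
    · exact const_of_hasDerivAt_zero inv1 z hz z₀ hz₀
    · have h0 : (c₁ z) ^ 2 - (c₂ z) ^ 2 - z ^ 2 =
          (c₁ z₀) ^ 2 - (c₂ z₀) ^ 2 - z₀ ^ 2 :=
        const_of_hasDerivAt_zero inv2 z hz z₀ hz₀
      rw [hd2def]
      linarith
  refine ⟨d₁, d₂, main, ?_, ?_⟩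
  · intro hpos z hz
    obtain ⟨e1, e2⟩ := main z hz
    have hc1p := hpos z hz
    have hx : (0:ℝ) < (c₁ z) ^ 2 := by positivity
    set x := (c₁ z) ^ 2 with hxdef
    have hquad : x ^ 2 - (2 * d₂ + z ^ 2) * x - d₁ ^ 2 = 0 := by
      have hc2sq : (c₂ z) ^ 2 = x - (z ^ 2 + 2 * d₂) := by
        simp only [hxdef]; linarith
      have hd : d₁ ^ 2 = x * (c₂ z) ^ 2 := by rw [← e1, hxdef]; ring
      rw [hd, hc2sq]; ring
    have h2x : 2 * x - (2 * d₂ + z ^ 2) = Real.sqrt ((2 * d₂ + z ^ 2) ^ 2 + 4 * d₁ ^ 2) := by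
      have hsq : (2 * x - (2 * d₂ + z ^ 2)) ^ 2 = (2 * d₂ + z ^ 2) ^ 2 + 4 * d₁ ^ 2 := by
        linear_combination 4 * hquad
      have hnn : 0 ≤ 2 * x - (2 * d₂ + z ^ 2) := by
        nlinarith [sq_nonneg d₁, hx, hquad]
      rw [← hsq, Real.sqrt_sq hnn]
    linarith
  · intro hd z hz
    obtain ⟨e1, e2⟩ := main z hz
    have hc2 : c₂ z = 0 := by
      rcases mul_eq_zero.1 (hd ▸ e1) with h | h
      · exact absurd h (hne z hz)
      · exact h
    refine ⟨hc2, ?_⟩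
    rw [hc2] at e2; linarith
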